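/- For every mean-zero polynomial f of degree at most d in independent random variables Z_1,...,Z_n, there exists a polynomial K_f in 2n variables such that K_f(z',z) = −K_f(z,z') for all inputs, and E[K_f(Z,Z')|Z] = f(Z), where (Z,Z') is the exchangeable pair obtained by resampling one uniformly random coordinate. -/

import Mathlib

open MeasureTheory MvPolynomial

variable {n : ℕ}

noncomputable def Aop (m : Fin n → ℕ → ℝ) (i : Fin n) :
    MvPolynomial (Fin n) ℝ →ₗ[ℝ] MvPolynomial (Fin n) ℝ :=
  (MvPolynomial.basisMonomials (Fin n) ℝ).constr ℝ
    (fun β => m i (β i) • MvPolynomial.monomial (Finsupp.erase i β) 1)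

theorem Aop_monomial (m : Fin n → ℕ → ℝ) (i : Fin n) (β : Fin n →₀ ℕ) (c : ℝ) :
    Aop m i (monomial β c) = (c * m i (β i)) • monomial (Finsupp.erase i β) 1 := by
  have h : (monomial β c : MvPolynomial (Fin n) ℝ)
      = c • (MvPolynomial.basisMonomials (Fin n) ℝ) β := by
    simp [coe_basisMonomials, smul_monomial]
  rw [h, _root_.map_smul, Aop, Module.Basis.constr_basis, smul_smul]

theorem Aop_mul_monomial (m : Fin n → ℕ → ℝ) (i : Fin n) (p : MvPolynomial (Fin n) ℝ)
    (δ : Fin n →₀ ℕ) (b : ℝ) (hδ : δ i = 0) :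
    Aop m i (p * monomial δ b) = Aop m i p * monomial δ b := by
  induction p using MvPolynomial.induction_on' with
  | add p₁ p₂ h₁ h₂ => rw [add_mul, map_add, h₁, h₂, map_add, add_mul]
  | monomial γ c =>
    rw [MvPolynomial.monomial_mul, Aop_monomial, Aop_monomial, smul_mul_assoc,
      MvPolynomial.monomial_mul, one_mul]
    have h1 : (γ + δ) i = γ i := by simp [hδ]
    have h2 : Finsupp.erase i (γ + δ) = Finsupp.erase i γ + δ := by
      rw [Finsupp.erase_add,
        Finsupp.erase_of_notMem_support (f := δ) (by simp [Finsupp.mem_support_iff, hδ])]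
    rw [h1, h2]
    rw [show (monomial (Finsupp.erase i γ + δ)) b
        = b • (monomial (Finsupp.erase i γ + δ)) (1 : ℝ) by simp [smul_monomial],
      show (monomial (Finsupp.erase i γ + δ)) (1 : ℝ)
        = (monomial (Finsupp.erase i γ)) (1:ℝ) * (monomial δ) 1 by
          rw [MvPolynomial.monomial_mul, one_mul],
      smul_smul]
    ring_nf

theorem Aop_mul (m : Fin n → ℕ → ℝ) (i : Fin n) (p q : MvPolynomial (Fin n) ℝ)
    (hq : ∀ γ ∈ q.support, γ i = 0) : Aop m i (p * q) = Aop m i p * q := by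
  conv_lhs => rw [q.as_sum]
  conv_rhs => rw [q.as_sum]
  rw [Finset.mul_sum, map_sum, Finset.mul_sum]
  exact Finset.sum_congr rfl fun δ hδ => Aop_mul_monomial m i p δ _ (hq δ hδ)

theorem coeff_zero_of_not_mem_vars {i : Fin n} {q : MvPolynomial (Fin n) ℝ}
    (h : i ∉ q.vars) : ∀ γ ∈ q.support, γ i = 0 := by
  intro γ hγ
  by_contra hne
  exact h ((MvPolynomial.mem_vars i).2 ⟨γ, hγ, Finsupp.mem_support_iff.2 hne⟩)

theorem Aop_one (m : Fin n → ℕ → ℝ) (i : Fin n) :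
    Aop m i 1 = m i 0 • (1 : MvPolynomial (Fin n) ℝ) := by
  rw [show (1 : MvPolynomial (Fin n) ℝ) = monomial 0 1 by simp, Aop_monomial]
  simp

theorem Aop_of_not_mem_vars (m : Fin n → ℕ → ℝ) (i : Fin n) (hm0 : m i 0 = 1)
    (q : MvPolynomial (Fin n) ℝ) (hq : i ∉ q.vars) : Aop m i q = q := by
  conv_lhs => rw [← one_mul q]
  rw [Aop_mul m i 1 q (coeff_zero_of_not_mem_vars hq), Aop_one, hm0, one_smul, one_mul]

noncomputable def cB (m : Fin n → ℕ → ℝ) (β : Fin n →₀ ℕ) : MvPolynomial (Fin n) ℝ :=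
  ∏ j ∈ β.support, (X j ^ β j - C (m j (β j)))

theorem vars_cB (m : Fin n → ℕ → ℝ) (β : Fin n →₀ ℕ) : (cB m β).vars ⊆ β.support := by
  refine (MvPolynomial.vars_prod _).trans ?_
  intro i hi
  rw [Finset.mem_biUnion] at hi
  obtain ⟨j, hj, hij⟩ := hi
  have : (X (R := ℝ) j ^ β j - C (m j (β j))).vars ⊆ {j} := by
    refine (MvPolynomial.vars_sub_subset _).trans ?_
    simp only [MvPolynomial.vars_C, Finset.union_empty]
    exact (MvPolynomial.vars_pow _ _).trans (by simp [MvPolynomial.vars_X])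
  have := this hij
  simp only [Finset.mem_singleton] at this
  subst this; exact hj

theorem Aop_factor (m : Fin n → ℕ → ℝ) (i : Fin n) (hm0 : m i 0 = 1) (k : ℕ) :
    Aop m i (X i ^ k - C (m i k)) = 0 := by
  have h1 : (X (R := ℝ) i ^ k : MvPolynomial (Fin n) ℝ) = monomial (Finsupp.single i k) 1 :=
    MvPolynomial.X_pow_eq_monomial
  have h2 : (C (m i k) : MvPolynomial (Fin n) ℝ) = monomial 0 (m i k) :=
    MvPolynomial.C_apply
  rw [map_sub, h1, h2, Aop_monomial, Aop_monomial]
  simp only [Finsupp.erase_single, Finsupp.erase_zero, Finsupp.single_eq_same, hm0, Finsupp.coe_zero, Pi.zero_apply,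
    one_mul, mul_one]
  exact sub_self (m i k • (monomial 0 1 : MvPolynomial (Fin n) ℝ))

theorem Aop_cB_mem (m : Fin n → ℕ → ℝ) (β : Fin n →₀ ℕ) (i : Fin n) (hm0 : m i 0 = 1)
    (hi : i ∈ β.support) : Aop m i (cB m β) = 0 := by
  rw [cB, ← Finset.mul_prod_erase _ _ hi]
  rw [Aop_mul m i _ _ ?hvars, Aop_factor m i hm0, zero_mul]
  case hvars =>
    refine coeff_zero_of_not_mem_vars (fun hmem => ?_)
    have := (MvPolynomial.vars_prod _) hmem
    rw [Finset.mem_biUnion] at this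
    obtain ⟨j, hj, hij⟩ := this
    have hsub : (X (R := ℝ) j ^ β j - C (m j (β j))).vars ⊆ {j} := by
      refine (MvPolynomial.vars_sub_subset _).trans ?_
      simp only [MvPolynomial.vars_C, Finset.union_empty]
      exact (MvPolynomial.vars_pow _ _).trans (by simp [MvPolynomial.vars_X])
    have := hsub hij
    simp only [Finset.mem_singleton] at this
    subst this
    exact (Finset.notMem_erase i _) hj

theorem Aop_cB_not_mem (m : Fin n → ℕ → ℝ) (β : Fin n →₀ ℕ) (i : Fin n) (hm0 : m i 0 = 1)
    (hi : i ∉ β.support) : Aop m i (cB m β) = cB m β :=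
  Aop_of_not_mem_vars m i hm0 _ (fun h => hi (vars_cB m β h))

noncomputable def Lop (m : Fin n → ℕ → ℝ) :
    MvPolynomial (Fin n) ℝ →ₗ[ℝ] MvPolynomial (Fin n) ℝ :=
  (n : ℝ)⁻¹ • ∑ i, (LinearMap.id - Aop m i)

theorem Lop_apply (m : Fin n → ℕ → ℝ) (p : MvPolynomial (Fin n) ℝ) :
    Lop m p = (n : ℝ)⁻¹ • ∑ i, (p - Aop m i p) := by
  simp [Lop, LinearMap.sum_apply]

theorem Lop_cB (m : Fin n → ℕ → ℝ) (hm0 : ∀ i, m i 0 = 1) (β : Fin n →₀ ℕ) (hβ : β ≠ 0) :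
    Lop m (((n : ℝ) / β.support.card) • cB m β) = cB m β := by
  have hsupp : β.support.Nonempty := Finsupp.support_nonempty_iff.2 hβ
  obtain ⟨i₀, hi₀⟩ := hsupp
  have hn : (n : ℝ) ≠ 0 := Nat.cast_ne_zero.2 (Nat.pos_of_ne_zero (fun h => by
    subst h; exact absurd i₀.2 (by simp)) ).ne'
  have hcard : (β.support.card : ℝ) ≠ 0 := Nat.cast_ne_zero.2 (Finset.card_ne_zero_of_mem hi₀)
  rw [_root_.map_smul, Lop_apply]
  have hsum : ∑ i, (cB m β - Aop m i (cB m β))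
      = (β.support.card : ℝ) • cB m β := by
    have : ∀ i : Fin n, cB m β - Aop m i (cB m β)
        = if i ∈ β.support then cB m β else 0 := by
      intro i
      by_cases hi : i ∈ β.support
      · rw [if_pos hi, Aop_cB_mem m β i (hm0 i) hi, sub_zero]
      · rw [if_neg hi, Aop_cB_not_mem m β i (hm0 i) hi, sub_self]
    rw [Finset.sum_congr rfl (fun i _ => this i), Finset.sum_ite_mem,
      Finset.univ_inter, Finset.sum_const, ← Nat.cast_smul_eq_nsmul ℝ]
  rw [hsum, smul_smul, smul_smul]
  rw [show (n : ℝ) / β.support.card * (n:ℝ)⁻¹ * β.support.card = 1 by field_simp, one_smul]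

theorem totalDegree_sub_le (p q : MvPolynomial (Fin n) ℝ) :
    (p - q).totalDegree ≤ max p.totalDegree q.totalDegree := by
  rw [sub_eq_add_neg]
  exact (MvPolynomial.totalDegree_add p (-q)).trans (by rw [MvPolynomial.totalDegree_neg])

theorem totalDegree_prod_sub_lt (m : Fin n → ℕ → ℝ) (β : Fin n →₀ ℕ) (s : Finset (Fin n))
    (hs : s.Nonempty) (hpos : ∀ j ∈ s, β j ≠ 0) :
    (∏ j ∈ s, (X j ^ β j - C (m j (β j))) - ∏ j ∈ s, (X (R := ℝ) j) ^ β j).totalDegree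
      < ∑ j ∈ s, β j := by
  classical
  induction s using Finset.induction_on with
  | empty => exact absurd hs (by simp)
  | @insert j s hj ih =>
    rcases Finset.eq_empty_or_nonempty s with rfl | hsne
    · simp only [Finset.prod_insert (Finset.notMem_empty j), Finset.prod_empty, mul_one,
        Finset.sum_insert (Finset.notMem_empty j), Finset.sum_empty, add_zero]
      rw [sub_sub_cancel_left, MvPolynomial.totalDegree_neg, MvPolynomial.totalDegree_C]
      exact Nat.pos_of_ne_zero (hpos j (Finset.mem_insert_self j _))
    · have hβj : β j ≠ 0 := hpos j (Finset.mem_insert_self j _)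
      have ihs := ih hsne (fun k hk => hpos k (Finset.mem_insert_of_mem hk))
      rw [Finset.prod_insert hj, Finset.prod_insert hj, Finset.sum_insert hj]
      have key : (X j ^ β j - C (m j (β j))) * ∏ k ∈ s, (X k ^ β k - C (m k (β k)))
          - (X (R := ℝ) j) ^ β j * ∏ k ∈ s, (X (R := ℝ) k) ^ β k
          = X j ^ β j * (∏ k ∈ s, (X k ^ β k - C (m k (β k))) - ∏ k ∈ s, (X (R := ℝ) k) ^ β k)
            - C (m j (β j)) * ∏ k ∈ s, (X k ^ β k - C (m k (β k))) := by ring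
      rw [key]
      have hdeg1 : (X (R := ℝ) j ^ β j *
          (∏ k ∈ s, (X k ^ β k - C (m k (β k))) - ∏ k ∈ s, (X (R := ℝ) k) ^ β k)).totalDegree
          < β j + ∑ k ∈ s, β k := by
        refine lt_of_le_of_lt (MvPolynomial.totalDegree_mul _ _) ?_
        rw [MvPolynomial.totalDegree_X_pow]
        exact Nat.add_lt_add_left ihs _
      have hdegfac : ∀ k : Fin n, (X (R := ℝ) k ^ β k - C (m k (β k))).totalDegree ≤ β k := by
        intro k
        refine (totalDegree_sub_le _ _).trans ?_
        simp [MvPolynomial.totalDegree_X_pow, MvPolynomial.totalDegree_C]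
      have hdeg2 : (C (m j (β j)) * ∏ k ∈ s, (X k ^ β k - C (m k (β k)))).totalDegree
          < β j + ∑ k ∈ s, β k := by
        refine lt_of_le_of_lt (MvPolynomial.totalDegree_mul _ _) ?_
        rw [MvPolynomial.totalDegree_C, zero_add]
        calc (∏ k ∈ s, (X k ^ β k - C (m k (β k)))).totalDegree
            ≤ ∑ k ∈ s, β k := (MvPolynomial.totalDegree_finset_prod _ _).trans
              (Finset.sum_le_sum fun k _ => hdegfac k)
          _ < β j + ∑ k ∈ s, β k := Nat.lt_add_of_pos_left (Nat.pos_of_ne_zero hβj)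
      exact lt_of_le_of_lt (totalDegree_sub_le _ _) (max_lt hdeg1 hdeg2)

theorem monomial_eq_prod (β : Fin n →₀ ℕ) :
    (monomial β 1 : MvPolynomial (Fin n) ℝ) = ∏ j ∈ β.support, (X (R := ℝ) j) ^ β j := by
  rw [MvPolynomial.monomial_eq, map_one, one_mul, Finsupp.prod]

theorem totalDegree_cB_sub_lt (m : Fin n → ℕ → ℝ) (β : Fin n →₀ ℕ) (hβ : β ≠ 0) :
    (cB m β - monomial β 1).totalDegree < β.sum fun _ e => e := by
  rw [monomial_eq_prod, cB, Finsupp.sum]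
  exact totalDegree_prod_sub_lt m β _ (Finsupp.support_nonempty_iff.2 hβ)
    (fun j hj => Finsupp.mem_support_iff.1 hj)

theorem exists_Lop_eq_sub_C (m : Fin n → ℕ → ℝ) (hm0 : ∀ i, m i 0 = 1) (D : ℕ) :
    ∀ f : MvPolynomial (Fin n) ℝ, f.totalDegree ≤ D →
      ∃ (g : MvPolynomial (Fin n) ℝ) (c : ℝ), Lop m g = f - C c := by
  induction D using Nat.strong_induction_on with
  | _ D ih =>
    intro f hf
    classical
    set s := f.support.erase 0 with hs
    have hsplit : f = C (f.coeff 0) + ∑ β ∈ s, monomial β (f.coeff β) := by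
      by_cases h0 : (0 : Fin n →₀ ℕ) ∈ f.support
      · conv_lhs => rw [f.as_sum]
        rw [← Finset.add_sum_erase _ _ h0, MvPolynomial.monomial_zero']
      · rw [MvPolynomial.notMem_support_iff.1 h0, map_zero, zero_add, hs,
          Finset.erase_eq_of_notMem h0]
        exact f.as_sum
    rcases Finset.eq_empty_or_nonempty s with hse | hsne
    · rw [hse, Finset.sum_empty, add_zero] at hsplit
      refine ⟨0, f.coeff 0, ?_⟩
      rw [map_zero, ← hsplit, sub_self]
    -- nonempty case
    have hβne : ∀ β ∈ s, β ≠ 0 := fun β hβ => Finset.ne_of_mem_erase hβ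
    have hβsum : ∀ β ∈ s, (β.sum fun _ e => e) ≤ D := fun β hβ =>
      (MvPolynomial.le_totalDegree (Finset.mem_of_mem_erase hβ)).trans hf
    have hDpos : 0 < D := by
      obtain ⟨β, hβ⟩ := hsne
      have h1 : 1 ≤ β.sum fun _ e => e := by
        rcases Finsupp.support_nonempty_iff.2 (hβne β hβ) with ⟨j, hj⟩
        calc 1 ≤ β j := Nat.pos_of_ne_zero (Finsupp.mem_support_iff.1 hj)
          _ ≤ β.sum fun _ e => e := by
              rw [Finsupp.sum]
              exact Finset.single_le_sum (fun _ _ => Nat.zero_le _) hj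
      exact lt_of_lt_of_le h1 (hβsum β hβ)
    set h : MvPolynomial (Fin n) ℝ :=
      ∑ β ∈ s, f.coeff β • (monomial β 1 - cB m β) with hh
    have hhdeg : h.totalDegree < D := by
      refine lt_of_le_of_lt (MvPolynomial.totalDegree_finset_sum _ _) ?_
      rw [Finset.sup_lt_iff (by simpa using hDpos)]
      intro β hβ
      refine lt_of_le_of_lt (MvPolynomial.totalDegree_smul_le _ _) ?_
      have : (monomial β (1:ℝ) - cB m β).totalDegree = (cB m β - monomial β 1).totalDegree := by
        rw [← MvPolynomial.totalDegree_neg, neg_sub]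
      rw [this]
      exact lt_of_lt_of_le (totalDegree_cB_sub_lt m β (hβne β hβ)) (hβsum β hβ)
    obtain ⟨g₂, c₂, hg₂⟩ := ih h.totalDegree hhdeg h le_rfl
    refine ⟨(∑ β ∈ s, f.coeff β • (((n:ℝ) / β.support.card) • cB m β)) + g₂,
      f.coeff 0 + c₂, ?_⟩
    rw [map_add, map_sum, hg₂]
    have hLsum : ∑ β ∈ s, Lop m (f.coeff β • (((n:ℝ) / β.support.card) • cB m β))
        = ∑ β ∈ s, f.coeff β • cB m β := by
      refine Finset.sum_congr rfl fun β hβ => ?_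
      rw [_root_.map_smul, Lop_cB m hm0 β (hβne β hβ)]
    rw [hLsum]
    have hmono : ∑ β ∈ s, monomial β (f.coeff β)
        = ∑ β ∈ s, f.coeff β • cB m β + h := by
      rw [hh, ← Finset.sum_add_distrib]
      refine Finset.sum_congr rfl fun β hβ => ?_
      rw [← smul_add, add_sub_cancel]
      simp [smul_monomial]
    rw [map_add]
    linear_combination -hsplit - hmono

noncomputable def Elin (m : Fin n → ℕ → ℝ) : MvPolynomial (Fin n) ℝ →ₗ[ℝ] ℝ :=
  (MvPolynomial.basisMonomials (Fin n) ℝ).constr ℝ (fun β => ∏ i, m i (β i))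

theorem Elin_monomial (m : Fin n → ℕ → ℝ) (β : Fin n →₀ ℕ) (c : ℝ) :
    Elin m (monomial β c) = c * ∏ i, m i (β i) := by
  have h : (monomial β c : MvPolynomial (Fin n) ℝ)
      = c • (MvPolynomial.basisMonomials (Fin n) ℝ) β := by
    simp [coe_basisMonomials, smul_monomial]
  rw [h, _root_.map_smul, Elin, Module.Basis.constr_basis, smul_eq_mul]

theorem Elin_eq (m : Fin n → ℕ → ℝ) (f : MvPolynomial (Fin n) ℝ) :
    Elin m f = ∑ β ∈ f.support, f.coeff β * ∏ i, m i (β i) := by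
  conv_lhs => rw [f.as_sum]
  rw [map_sum]
  exact Finset.sum_congr rfl fun β _ => Elin_monomial m β _

theorem Elin_Aop (m : Fin n → ℕ → ℝ) (hm0 : ∀ i, m i 0 = 1) (i : Fin n)
    (p : MvPolynomial (Fin n) ℝ) : Elin m (Aop m i p) = Elin m p := by
  induction p using MvPolynomial.induction_on' with
  | add p₁ p₂ h₁ h₂ => rw [map_add, map_add, map_add, h₁, h₂]
  | monomial β c =>
    rw [Aop_monomial, _root_.map_smul, Elin_monomial, Elin_monomial, smul_eq_mul, one_mul]
    have : ∏ j, m j ((Finsupp.erase i β) j)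
        = m i 0 * ∏ j ∈ Finset.univ.erase i, m j (β j) := by
      rw [← Finset.mul_prod_erase Finset.univ _ (Finset.mem_univ i), Finsupp.erase_same]
      congr 1
      exact Finset.prod_congr rfl fun j hj => by
        rw [Finsupp.erase_ne (Finset.ne_of_mem_erase hj)]
    rw [this, hm0, one_mul, ← Finset.mul_prod_erase Finset.univ (fun j => m j (β j))
      (Finset.mem_univ i)]
    ring

theorem Elin_Lop (m : Fin n → ℕ → ℝ) (hm0 : ∀ i, m i 0 = 1) (g : MvPolynomial (Fin n) ℝ) :
    Elin m (Lop m g) = 0 := by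
  rw [Lop_apply, _root_.map_smul, map_sum]
  have : ∀ i : Fin n, Elin m (g - Aop m i g) = 0 := fun i => by
    rw [map_sub, Elin_Aop m hm0, sub_self]
  rw [Finset.sum_congr rfl fun i _ => this i, Finset.sum_const, smul_zero, smul_zero]

noncomputable def mom (μ : Fin n → Measure ℝ) : Fin n → ℕ → ℝ := fun i k => ∫ x, x ^ k ∂(μ i)

theorem mom_zero (μ : Fin n → Measure ℝ) [∀ i, IsProbabilityMeasure (μ i)] (i : Fin n) :
    mom μ i 0 = 1 := by
  simp [mom]

theorem eval_update_eq (p : MvPolynomial (Fin n) ℝ) (z : Fin n → ℝ) (i : Fin n) (x : ℝ) :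
    MvPolynomial.eval (Function.update z i x) p
      = ∑ β ∈ p.support,
          (p.coeff β * ∏ j ∈ Finset.univ.erase i, z j ^ β j) * x ^ β i := by
  rw [MvPolynomial.eval_eq']
  refine Finset.sum_congr rfl fun β _ => ?_
  rw [← Finset.mul_prod_erase Finset.univ (fun j => Function.update z i x j ^ β j)
    (Finset.mem_univ i), Function.update_self]
  have hrest : ∏ j ∈ Finset.univ.erase i, Function.update z i x j ^ β j
      = ∏ j ∈ Finset.univ.erase i, z j ^ β j :=
    Finset.prod_congr rfl fun j hj => by
      rw [Function.update_of_ne (Finset.ne_of_mem_erase hj)]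
  rw [hrest]
  ring

theorem integrable_eval_update (μ : Fin n → Measure ℝ)
    (hint : ∀ i k, Integrable (fun x : ℝ => x ^ k) (μ i))
    (p : MvPolynomial (Fin n) ℝ) (z : Fin n → ℝ) (i : Fin n) :
    Integrable (fun x => MvPolynomial.eval (Function.update z i x) p) (μ i) := by
  have : (fun x => MvPolynomial.eval (Function.update z i x) p)
      = fun x => ∑ β ∈ p.support,
          (p.coeff β * ∏ j ∈ Finset.univ.erase i, z j ^ β j) * x ^ β i :=
    funext fun x => by rw [eval_update_eq]
  rw [this]
  exact integrable_finset_sum _ fun β _ => ((hint i (β i)).const_mul _)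

theorem eval_monomial_erase (z : Fin n → ℝ) (i : Fin n) (β : Fin n →₀ ℕ) :
    MvPolynomial.eval z (monomial (Finsupp.erase i β) (1 : ℝ))
      = ∏ j ∈ Finset.univ.erase i, z j ^ β j := by
  rw [MvPolynomial.eval_monomial, one_mul,
    Finsupp.prod_fintype _ _ (fun j => pow_zero (z j)),
    ← Finset.mul_prod_erase Finset.univ (fun j => z j ^ (Finsupp.erase i β) j)
      (Finset.mem_univ i), Finsupp.erase_same, pow_zero, one_mul]
  exact Finset.prod_congr rfl fun j hj => by
    rw [Finsupp.erase_ne (Finset.ne_of_mem_erase hj)]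

theorem integral_eval_update (μ : Fin n → Measure ℝ) [∀ i, IsProbabilityMeasure (μ i)]
    (hint : ∀ i k, Integrable (fun x : ℝ => x ^ k) (μ i))
    (p : MvPolynomial (Fin n) ℝ) (z : Fin n → ℝ) (i : Fin n) :
    ∫ x, MvPolynomial.eval (Function.update z i x) p ∂(μ i)
      = MvPolynomial.eval z (Aop (mom μ) i p) := by
  have hA : Aop (mom μ) i p = ∑ β ∈ p.support,
      (p.coeff β * mom μ i (β i)) • monomial (Finsupp.erase i β) 1 := by
    conv_lhs => rw [p.as_sum]
    rw [map_sum]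
    exact Finset.sum_congr rfl fun β _ => Aop_monomial _ i β _
  have hL : ∫ x, MvPolynomial.eval (Function.update z i x) p ∂(μ i)
      = ∑ β ∈ p.support,
          (p.coeff β * ∏ j ∈ Finset.univ.erase i, z j ^ β j) * mom μ i (β i) := by
    rw [show (fun x => MvPolynomial.eval (Function.update z i x) p)
        = fun x => ∑ β ∈ p.support,
            (p.coeff β * ∏ j ∈ Finset.univ.erase i, z j ^ β j) * x ^ β i from
      funext fun x => by rw [eval_update_eq]]
    rw [integral_finset_sum _ fun β _ => ((hint i (β i)).const_mul _)]
    exact Finset.sum_congr rfl fun β _ => integral_const_mul _ _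
  rw [hL, hA, map_sum]
  refine Finset.sum_congr rfl fun β _ => ?_
  rw [show ((p.coeff β * mom μ i (β i)) • monomial (Finsupp.erase i β) (1:ℝ))
      = C (p.coeff β * mom μ i (β i)) * monomial (Finsupp.erase i β) 1 from
    (MvPolynomial.smul_eq_C_mul _ _), map_mul, MvPolynomial.eval_C, eval_monomial_erase]
  ring

theorem explicit_kernel_exists
    {n d : ℕ} (μ : Fin n → Measure ℝ)
    [∀ i, IsProbabilityMeasure (μ i)]
    (hint : ∀ i k, Integrable (fun x : ℝ => x ^ k) (μ i))
    (E : MvPolynomial (Fin n) ℝ → ℝ)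
    (hE : ∀ f, E f = ∑ β ∈ f.support, f.coeff β * ∏ i, ∫ x, x ^ β i ∂(μ i))
    (f : MvPolynomial (Fin n) ℝ) (hdeg : f.totalDegree ≤ d) (hf0 : E f = 0) :
    ∃ K : MvPolynomial (Fin n ⊕ Fin n) ℝ,
      (∀ z z' : Fin n → ℝ,
        MvPolynomial.eval (Sum.elim z' z) K = - MvPolynomial.eval (Sum.elim z z') K)
      ∧ (∀ z : Fin n → ℝ,
        (1 / n : ℝ) * ∑ i, ∫ x,
            MvPolynomial.eval (Sum.elim z (Function.update z i x)) K ∂(μ i)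
          = MvPolynomial.eval z f) := by
  have hEE : ∀ p : MvPolynomial (Fin n) ℝ, E p = Elin (mom μ) p := by
    intro p
    rw [hE p, Elin_eq]
    simp only [mom]
  obtain ⟨g, c, hg⟩ := exists_Lop_eq_sub_C (mom μ) (mom_zero μ) f.totalDegree f le_rfl
  have hc : c = 0 := by
    have h1 := Elin_Lop (mom μ) (mom_zero μ) g
    rw [hg, map_sub, ← hEE, hf0, zero_sub] at h1
    have h2 : Elin (mom μ) (C c) = c := by
      rw [show (C c : MvPolynomial (Fin n) ℝ) = monomial 0 c from MvPolynomial.C_apply,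
        Elin_monomial]
      simp [mom_zero μ]
    rw [h2] at h1
    linarith
  rw [hc, map_zero, sub_zero] at hg
  refine ⟨MvPolynomial.rename Sum.inl g - MvPolynomial.rename Sum.inr g, ?_, ?_⟩
  · intro z z'
    rw [map_sub, map_sub, MvPolynomial.eval_rename, MvPolynomial.eval_rename,
      MvPolynomial.eval_rename, MvPolynomial.eval_rename, Sum.elim_comp_inl,
      Sum.elim_comp_inr, Sum.elim_comp_inl, Sum.elim_comp_inr]
    ring
  · intro z
    have hintegrand : ∀ (i : Fin n) (x : ℝ),
        MvPolynomial.eval (Sum.elim z (Function.update z i x))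
            (MvPolynomial.rename Sum.inl g - MvPolynomial.rename Sum.inr g)
          = MvPolynomial.eval z g
            - MvPolynomial.eval (Function.update z i x) g := by
      intro i x
      rw [map_sub, MvPolynomial.eval_rename, MvPolynomial.eval_rename, Sum.elim_comp_inl,
        Sum.elim_comp_inr]
    have hInt : ∀ i : Fin n,
        ∫ x, MvPolynomial.eval (Sum.elim z (Function.update z i x))
            (MvPolynomial.rename Sum.inl g - MvPolynomial.rename Sum.inr g) ∂(μ i)
          = MvPolynomial.eval z g - MvPolynomial.eval z (Aop (mom μ) i g) := by
      intro i
      rw [show (fun x => MvPolynomial.eval (Sum.elim z (Function.update z i x))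
            (MvPolynomial.rename Sum.inl g - MvPolynomial.rename Sum.inr g))
          = fun x => MvPolynomial.eval z g
            - MvPolynomial.eval (Function.update z i x) g from funext (hintegrand i)]
      rw [integral_sub (integrable_const _) (integrable_eval_update μ hint g z i),
        integral_const, integral_eval_update μ hint g z i]
      simp [measure_univ]
    rw [Finset.sum_congr rfl fun i _ => hInt i]
    have := congrArg (MvPolynomial.eval z) hg
    rw [Lop_apply, MvPolynomial.smul_eq_C_mul, map_mul, MvPolynomial.eval_C, map_sum] at this
    rw [← this, one_div]
    congr 1
    exact Finset.sum_congr rfl fun i _ => by rw [map_sub]
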